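/- For every ℓ ∈ ℕ^r and every index i, the increments satisfy h(ℓ+E_i) − h(ℓ) ∈ {0,1} and h̄(ℓ+E_i) − h̄(ℓ) ∈ {0,1}, and their sum is exactly 1: (h(ℓ+E_i) − h(ℓ)) + (h̄(ℓ+E_i) − h̄(ℓ)) = 1. In particular the pair (h, δ − h̄) satisfies the Combinatorial Duality Property for any constant δ. -/

import Mathlib

/-- `Gbar r ℓ` is the subspace of `r`-tuples of power series whose `i`-th component has
order at least `ℓ i`, for every `i`. -/
noncomputable def Gbar (r : ℕ) (ℓ : Fin r → ℕ) : Submodule ℂ (Fin r → PowerSeries ℂ) where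
  carrier := {f | ∀ i : Fin r, (ℓ i : ℕ∞) ≤ (f i).order}
  zero_mem' := by
    intro i
    simp [PowerSeries.order_zero]
  add_mem' := by
    intro a b ha hb i
    refine le_trans (le_min (ha i) (hb i)) ?_
    simpa using PowerSeries.min_order_le_order_add (a i) (b i)
  smul_mem' := by
    intro c f hf i
    refine PowerSeries.le_order _ _ ?_
    intro n hn
    have hlt : (n : ℕ∞) < ((f : Fin r → PowerSeries ℂ) i).order := lt_of_lt_of_le hn (hf i)
    have : (PowerSeries.coeff (R := ℂ) n) ((c • f) i) = c • (PowerSeries.coeff (R := ℂ) n) (f i) := by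
      simp
    rw [this, PowerSeries.coeff_of_lt_order n hlt, smul_zero]

/-- `F O ℓ = O ∩ Ḡ(ℓ)`, the valuation filtration of the subspace `O`. -/
noncomputable def Ffil (r : ℕ) (O : Submodule ℂ (Fin r → PowerSeries ℂ)) (ℓ : Fin r → ℕ) :
    Submodule ℂ (Fin r → PowerSeries ℂ) :=
  O ⊓ Gbar r ℓ

/-- `hfun O ℓ = dim_ℂ O / (O ∩ Ḡ(ℓ))`, the Hilbert function of the filtration. -/
noncomputable def hfun (r : ℕ) (O : Submodule ℂ (Fin r → PowerSeries ℂ)) (ℓ : Fin r → ℕ) : ℕ :=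
  Module.finrank ℂ (O ⧸ (Gbar r ℓ).comap O.subtype)

/-- `hbarfun O ℓ = dim_ℂ V / (Ḡ(ℓ) + O)`. -/
noncomputable def hbarfun (r : ℕ) (O : Submodule ℂ (Fin r → PowerSeries ℂ)) (ℓ : Fin r → ℕ) : ℕ :=
  Module.finrank ℂ ((Fin r → PowerSeries ℂ) ⧸ (Gbar r ℓ ⊔ O))

/-- `eN i` is the `i`-th standard basis vector of `ℕ^r`. -/
def eN {r : ℕ} (i : Fin r) : Fin r → ℕ := fun j => if j = i then 1 else 0

noncomputable def phiV (r : ℕ) (ℓ : Fin r → ℕ) (i : Fin r) :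
    (Fin r → PowerSeries ℂ) →ₗ[ℂ] ℂ :=
  (PowerSeries.coeff (R := ℂ) (ℓ i)).comp (LinearMap.proj i)

lemma phiV_apply (r : ℕ) (ℓ : Fin r → ℕ) (i : Fin r) (f : Fin r → PowerSeries ℂ) :
    phiV r ℓ i f = PowerSeries.coeff (R := ℂ) (ℓ i) (f i) := rfl

lemma mem_Gbar (r : ℕ) (ℓ : Fin r → ℕ) (f : Fin r → PowerSeries ℂ) :
    f ∈ Gbar r ℓ ↔ ∀ i : Fin r, (ℓ i : ℕ∞) ≤ (f i).order := Iff.rfl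

lemma order_succ_iff (f : PowerSeries ℂ) (n : ℕ) (h : (n : ℕ∞) ≤ f.order) :
    ((n + 1 : ℕ) : ℕ∞) ≤ f.order ↔ PowerSeries.coeff (R := ℂ) n f = 0 := by
  constructor
  · intro h'
    exact PowerSeries.coeff_of_lt_order n
      (lt_of_lt_of_le (by exact_mod_cast Nat.lt_succ_self n) h')
  · intro h0
    refine PowerSeries.le_order _ _ (fun k hk => ?_)
    have hk' : k < n + 1 := by exact_mod_cast hk
    rcases Nat.lt_succ_iff_lt_or_eq.mp hk' with hk2 | rfl
    · exact PowerSeries.coeff_of_lt_order k (lt_of_lt_of_le (by exact_mod_cast hk2) h)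
    · exact h0

lemma Gbar_succ (r : ℕ) (ℓ : Fin r → ℕ) (i : Fin r) :
    Gbar r (ℓ + eN i) = Gbar r ℓ ⊓ LinearMap.ker (phiV r ℓ i) := by
  ext f
  simp only [Submodule.mem_inf, LinearMap.mem_ker, mem_Gbar, phiV_apply]
  constructor
  · intro hf
    have hfi := hf i
    have hii : (ℓ + eN i) i = ℓ i + 1 := by simp [eN]
    rw [hii] at hfi
    have hℓi : (ℓ i : ℕ∞) ≤ (f i).order :=
      le_trans (by exact_mod_cast Nat.le_succ (ℓ i)) hfi
    refine ⟨fun j => ?_, (order_succ_iff (f i) (ℓ i) hℓi).mp hfi⟩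
    exact le_trans (by exact_mod_cast Nat.le_add_right (ℓ j) (eN i j)) (hf j)
  · rintro ⟨hf, h0⟩ j
    by_cases hj : j = i
    · subst hj
      have hjj : (ℓ + eN j) j = ℓ j + 1 := by simp [eN]
      rw [hjj]
      exact (order_succ_iff (f j) (ℓ j) (hf j)).mpr h0
    · have : (ℓ + eN i) j = ℓ j := by simp [eN, hj]
      rw [this]; exact hf j

lemma Gbar_mono (r : ℕ) (ℓ : Fin r → ℕ) (i : Fin r) :
    Gbar r (ℓ + eN i) ≤ Gbar r ℓ := by
  rw [Gbar_succ]; exact inf_le_left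

noncomputable def u0 (r : ℕ) (ℓ : Fin r → ℕ) (i : Fin r) : Fin r → PowerSeries ℂ :=
  Pi.single i (PowerSeries.monomial (R := ℂ) (ℓ i) 1)

lemma u0_mem (r : ℕ) (ℓ : Fin r → ℕ) (i : Fin r) : u0 r ℓ i ∈ Gbar r ℓ := by
  intro j
  by_cases hj : j = i
  · subst hj
    simp only [u0, Pi.single_eq_same]
    rw [PowerSeries.order_monomial_of_ne_zero _ _ one_ne_zero]
  · simp only [u0, Pi.single_eq_of_ne hj]
    simp [PowerSeries.order_zero]

lemma phiV_u0 (r : ℕ) (ℓ : Fin r → ℕ) (i : Fin r) : phiV r ℓ i (u0 r ℓ i) = 1 := by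
  simp [phiV_apply, u0, PowerSeries.coeff_monomial_same]

lemma Gbar_le_sup_span (r : ℕ) (ℓ : Fin r → ℕ) (i : Fin r) :
    Gbar r ℓ ≤ Gbar r (ℓ + eN i) ⊔ Submodule.span ℂ {u0 r ℓ i} := by
  intro f hf
  have hrem : f - phiV r ℓ i f • u0 r ℓ i ∈ Gbar r (ℓ + eN i) := by
    rw [Gbar_succ]
    refine ⟨sub_mem hf (Submodule.smul_mem _ _ (u0_mem r ℓ i)), ?_⟩
    simp [LinearMap.mem_ker, map_sub, phiV_u0]
  have : f = (f - phiV r ℓ i f • u0 r ℓ i) + phiV r ℓ i f • u0 r ℓ i := by ring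
  rw [this]
  exact Submodule.add_mem _ (Submodule.mem_sup_left hrem)
    (Submodule.mem_sup_right (Submodule.smul_mem _ _ (Submodule.mem_span_singleton_self _)))

noncomputable def psiV (r : ℕ) (ℓ : Fin r → ℕ) :
    (Fin r → PowerSeries ℂ) →ₗ[ℂ] (∀ j : Fin r, Fin (ℓ j) → ℂ) :=
  LinearMap.pi (fun j => LinearMap.pi
    (fun k : Fin (ℓ j) => (PowerSeries.coeff (R := ℂ) k).comp (LinearMap.proj j)))

lemma ker_psiV (r : ℕ) (ℓ : Fin r → ℕ) : LinearMap.ker (psiV r ℓ) = Gbar r ℓ := by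
  ext f
  simp only [LinearMap.mem_ker, mem_Gbar, psiV, funext_iff, LinearMap.pi_apply,
    LinearMap.comp_apply, LinearMap.proj_apply, Pi.zero_apply]
  constructor
  · intro h j
    refine PowerSeries.le_order _ _ (fun k hk => ?_)
    have hk' : k < ℓ j := by exact_mod_cast hk
    exact h j ⟨k, hk'⟩
  · intro h j k
    exact PowerSeries.coeff_of_lt_order _ (lt_of_lt_of_le (by exact_mod_cast k.2) (h j))

instance findim_quot_Gbar (r : ℕ) (ℓ : Fin r → ℕ) :
    FiniteDimensional ℂ ((Fin r → PowerSeries ℂ) ⧸ Gbar r ℓ) := by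
  rw [← ker_psiV]
  exact Module.Finite.equiv (LinearMap.quotKerEquivRange (psiV r ℓ)).symm

instance findim_quot_sup (r : ℕ) (ℓ : Fin r → ℕ) (O : Submodule ℂ (Fin r → PowerSeries ℂ)) :
    FiniteDimensional ℂ ((Fin r → PowerSeries ℂ) ⧸ (Gbar r ℓ ⊔ O)) :=
  Module.Finite.equiv (Submodule.quotientQuotientEquivQuotientSup (Gbar r ℓ) O)

instance findim_quot_comap (r : ℕ) (ℓ : Fin r → ℕ) (O : Submodule ℂ (Fin r → PowerSeries ℂ)) :
    FiniteDimensional ℂ (O ⧸ (Gbar r ℓ).comap O.subtype) := by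
  have hker : (Gbar r ℓ).comap O.subtype = LinearMap.ker ((Gbar r ℓ).mkQ ∘ₗ O.subtype) := by
    rw [LinearMap.ker_comp, Submodule.ker_mkQ]
  rw [hker]
  have : FiniteDimensional ℂ (LinearMap.range ((Gbar r ℓ).mkQ ∘ₗ O.subtype)) :=
    FiniteDimensional.finiteDimensional_submodule _
  exact Module.Finite.equiv (LinearMap.quotKerEquivRange _).symm

private lemma quot_finrank_add' {M : Type*} [AddCommGroup M] [Module ℂ M]
    (p q : Submodule ℂ M) (hpq : p ≤ q) [FiniteDimensional ℂ (M ⧸ p)] :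
    Module.finrank ℂ (M ⧸ q) + Module.finrank ℂ (q.map p.mkQ) = Module.finrank ℂ (M ⧸ p) := by
  have e := Submodule.quotientQuotientEquivQuotient p q hpq
  rw [← e.finrank_eq]
  exact Submodule.finrank_quotient_add_finrank _

set_option maxHeartbeats 1000000 in
set_option synthInstance.maxHeartbeats 200000 in
lemma key (r : ℕ) (O : Submodule ℂ (Fin r → PowerSeries ℂ)) (ℓ : Fin r → ℕ) (i : Fin r) :
    ∃ d dbar : ℕ, d ≤ 1 ∧ dbar ≤ 1 ∧ d + dbar = 1 ∧
      hfun r O (ℓ + eN i) = hfun r O ℓ + d ∧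
      hbarfun r O (ℓ + eN i) = hbarfun r O ℓ + dbar := by
  classical
  set φ := phiV r ℓ i with hφ
  set p : Submodule ℂ O := (Gbar r (ℓ + eN i)).comap O.subtype with hp
  set q : Submodule ℂ O := (Gbar r ℓ).comap O.subtype with hq
  have hpq : p ≤ q := Submodule.comap_mono (Gbar_mono r ℓ i)
  set pbar := Gbar r (ℓ + eN i) ⊔ O with hpb
  set qbar := Gbar r ℓ ⊔ O with hqb
  have hpqb : pbar ≤ qbar := sup_le_sup_right (Gbar_mono r ℓ i) O
  set d := Module.finrank ℂ (q.map p.mkQ) with hd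
  set dbar := Module.finrank ℂ (qbar.map pbar.mkQ) with hdb
  have hA : hfun r O ℓ + d = hfun r O (ℓ + eN i) := quot_finrank_add' p q hpq
  have hB : hbarfun r O ℓ + dbar = hbarfun r O (ℓ + eN i) := quot_finrank_add' pbar qbar hpqb
  have hfinO : FiniteDimensional ℂ (O ⧸ p) := findim_quot_comap r (ℓ + eN i) O
  have hfinV : FiniteDimensional ℂ ((Fin r → PowerSeries ℂ) ⧸ pbar) := findim_quot_sup r (ℓ + eN i) O
  have hfinS : FiniteDimensional ℂ (q.map p.mkQ) := FiniteDimensional.finiteDimensional_submodule _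
  have hfinSb : FiniteDimensional ℂ (qbar.map pbar.mkQ) := FiniteDimensional.finiteDimensional_submodule _
  -- the lifted functional on O ⧸ p
  have hker : p ≤ LinearMap.ker (φ ∘ₗ O.subtype) := by
    intro x hx
    have : (x : Fin r → PowerSeries ℂ) ∈ Gbar r (ℓ + eN i) := hx
    rw [Gbar_succ] at this
    simpa [LinearMap.mem_ker] using this.2
  set ψ : (O ⧸ p) →ₗ[ℂ] ℂ := p.liftQ (φ ∘ₗ O.subtype) hker with hψ
  have hψ_mk : ∀ y : O, ψ (p.mkQ y) = φ (y : Fin r → PowerSeries ℂ) := fun y => rfl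
  -- d ≤ 1
  have hd1 : d ≤ 1 := by
    have hinj : Function.Injective (ψ.domRestrict (q.map p.mkQ)) := by
      rw [← LinearMap.ker_eq_bot]
      rw [Submodule.eq_bot_iff]
      rintro ⟨x, hx⟩ hx0
      obtain ⟨y, hyq, rfl⟩ := hx
      have h0 : φ (y : Fin r → PowerSeries ℂ) = 0 := by
        exact (hψ_mk y).symm.trans (by simpa [LinearMap.domRestrict_apply] using hx0)
      have : y ∈ p := by
        rw [hp, Submodule.mem_comap, Gbar_succ]
        exact ⟨hyq, h0⟩
      ext
      simpa [Submodule.Quotient.mk_eq_zero] using this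
    have := LinearMap.finrank_le_finrank_of_injective hinj
    simpa [Module.finrank_self] using this
  -- dbar ≤ 1
  set x0 := pbar.mkQ (u0 r ℓ i) with hx0def
  have hdb1 : dbar ≤ 1 := by
    have hle : qbar.map pbar.mkQ ≤ Submodule.span ℂ {x0} := by
      have h1 : qbar ≤ pbar ⊔ Submodule.span ℂ {u0 r ℓ i} := by
        rw [hqb, hpb, sup_right_comm]
        exact sup_le_sup_right (Gbar_le_sup_span r ℓ i) O
      refine le_trans (Submodule.map_mono h1) ?_
      rw [Submodule.map_sup, Submodule.mkQ_map_self, bot_sup_eq, Submodule.map_span,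
        Set.image_singleton]
    have : Module.finrank ℂ (qbar.map pbar.mkQ) ≤
        Module.finrank ℂ (Submodule.span ℂ {x0}) := Submodule.finrank_mono hle
    refine le_trans this ?_
    by_cases hx : x0 = 0
    · rw [hx, Submodule.span_zero_singleton, finrank_bot]
      omega
    · rw [finrank_span_singleton hx]
  refine ⟨d, dbar, hd1, hdb1, ?_, hA.symm, hB.symm⟩
  by_cases hex : ∃ u, u ∈ O ∧ u ∈ Gbar r ℓ ∧ φ u ≠ 0
  · obtain ⟨u, huO, huG, huφ⟩ := hex
    -- dbar = 0
    have hGle : Gbar r ℓ ≤ pbar := by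
      intro g hg
      have hdec : g = (g - (φ g / φ u) • u) + (φ g / φ u) • u := by ring
      rw [hdec]
      refine Submodule.add_mem _ (Submodule.mem_sup_left ?_) (Submodule.mem_sup_right
        (Submodule.smul_mem _ _ huO))
      rw [Gbar_succ]
      constructor
      · exact sub_mem hg (Submodule.smul_mem _ _ huG)
      · show g - (φ g / φ u) • u ∈ LinearMap.ker φ
        rw [LinearMap.mem_ker, map_sub, map_smul, smul_eq_mul,
          div_mul_cancel₀ _ huφ, sub_self]
    have hqp : qbar = pbar := le_antisymm (sup_le hGle le_sup_right) hpqb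
    have hdb0 : dbar = 0 := by
      rw [hdb, hqp, Submodule.mkQ_map_self, finrank_bot _ _]
    -- d = 1
    have hmemq : (⟨u, huO⟩ : O) ∈ q := huG
    have hne : p.mkQ ⟨u, huO⟩ ≠ 0 := by
      intro h0
      rw [Submodule.mkQ_apply, Submodule.Quotient.mk_eq_zero] at h0
      have : u ∈ Gbar r (ℓ + eN i) := h0
      rw [Gbar_succ] at this
      exact huφ this.2
    have hnt : Nontrivial (q.map p.mkQ) :=
      ⟨⟨p.mkQ ⟨u, huO⟩, Submodule.mem_map_of_mem hmemq⟩, 0, by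
        simp only [ne_eq, Submodule.mk_eq_zero]
        exact hne⟩
    have hd_pos : 0 < d := Module.finrank_pos_iff.mpr hnt
    omega
  · push_neg at hex
    -- d = 0
    have hqp : q = p := by
      refine le_antisymm ?_ hpq
      intro y hy
      have h0 : φ (y : Fin r → PowerSeries ℂ) = 0 := hex _ y.2 hy
      rw [hp, Submodule.mem_comap, Gbar_succ]
      exact ⟨hy, h0⟩
    have hd0 : d = 0 := by
      rw [hd, ← hqp, hqp, Submodule.mkQ_map_self, finrank_bot _ _]
    -- dbar = 1
    have hx0ne : x0 ≠ 0 := by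
      intro h0
      rw [hx0def, Submodule.mkQ_apply, Submodule.Quotient.mk_eq_zero] at h0
      obtain ⟨g, hg, o, ho, heq⟩ := Submodule.mem_sup.mp h0
      have hoG : o ∈ Gbar r ℓ := by
        have : o = u0 r ℓ i - g := by rw [← heq]; ring
        rw [this]
        exact sub_mem (u0_mem r ℓ i) (Gbar_mono r ℓ i hg)
      have hφo : φ o = 0 := hex _ ho hoG
      have hφg : φ g = 0 := by
        rw [Gbar_succ] at hg
        simpa [LinearMap.mem_ker] using hg.2
      have : φ (u0 r ℓ i) = 0 := by
        rw [← heq, map_add, hφg, hφo, add_zero]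
      rw [phiV_u0] at this
      exact one_ne_zero this
    have hx0mem : x0 ∈ qbar.map pbar.mkQ :=
      Submodule.mem_map_of_mem (Submodule.mem_sup_left (u0_mem r ℓ i))
    have hnt : Nontrivial (qbar.map pbar.mkQ) :=
      ⟨⟨x0, hx0mem⟩, 0, by simp only [ne_eq, Submodule.mk_eq_zero]; exact hx0ne⟩
    have hdb_pos : 0 < dbar := Module.finrank_pos_iff.mpr hnt
    omega

/-- the increments of `h` and `h̄` in any basis direction lie in `{0,1}`
and sum to exactly `1`; in particular the pair `(h, δ − h̄)` satisfies the Combinatorial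
Duality Property for any constant `δ`. -/
theorem statement9 (r : ℕ) (hr : 1 ≤ r) (O : Submodule ℂ (Fin r → PowerSeries ℂ)) :
    ∀ (ℓ : Fin r → ℕ) (i : Fin r),
      ((hfun r O (ℓ + eN i) : ℤ) - hfun r O ℓ = 0 ∨ (hfun r O (ℓ + eN i) : ℤ) - hfun r O ℓ = 1) ∧
      ((hbarfun r O (ℓ + eN i) : ℤ) - hbarfun r O ℓ = 0 ∨
        (hbarfun r O (ℓ + eN i) : ℤ) - hbarfun r O ℓ = 1) ∧
      ((hfun r O (ℓ + eN i) : ℤ) - hfun r O ℓ) +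
        ((hbarfun r O (ℓ + eN i) : ℤ) - hbarfun r O ℓ) = 1 ∧
      ∀ δ : ℤ, ¬(((hfun r O (ℓ + eN i) : ℤ) - hfun r O ℓ ≠ 0) ∧
        ((δ - hbarfun r O (ℓ + eN i)) - (δ - hbarfun r O ℓ) ≠ 0)) := by
  intro ℓ i
  obtain ⟨d, dbar, hd1, hdb1, hsum, hA, hB⟩ := key r O ℓ i
  refine ⟨?_, ?_, ?_, fun δ => ?_⟩ <;> omega
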